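/- Let X_1, …, X_N be n×n real symmetric positive definite matrices and w_1, …, w_N > 0. Define A = (Σ_j w_j)^{-1} Σ_i w_i X_i and B = (Σ_j w_j)^{-1} Σ_i w_i X_i^{-1}, and let M = (B^{-1})^{1/2} ((B^{1/2} A B^{1/2})^{1/2}) (B^{-1})^{1/2}. Then M minimizes the weighted sum of symmetrized KL divergences Σ_{i=1}^N w_i J(X_i, Y) over all n×n symmetric positive definite matrices Y, where J(X, Y) = (1/4)(tr(X^{-1} Y) + tr(Y^{-1} X) − 2n). -/

import Mathlib

private lemma trace_nonneg_of_psd {m : ℕ} {M : Matrix (Fin m) (Fin m) ℝ}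
    (hM : M.PosSemidef) : 0 ≤ M.trace := by
  rw [Matrix.trace]
  refine Finset.sum_nonneg fun i _ => ?_
  exact hM.diag_nonneg


/-- Let `X₁, …, X_N` be `n×n` real SPD matrices with positive weights
`w₁, …, w_N`. With `A = (∑ w)⁻¹ ∑ wᵢ Xᵢ`, `B = (∑ w)⁻¹ ∑ wᵢ Xᵢ⁻¹`, and
`M = (B⁻¹)^{1/2} ((B^{1/2} A B^{1/2})^{1/2}) (B⁻¹)^{1/2}` (square roots encoded via
their defining property as the unique SPD square roots: `C * C = B⁻¹`, `D * D = B`,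
`E * E = D * A * D`, so `M = C * E * C`), the matrix `M` minimizes the weighted sum of
symmetrized KL divergences `Y ↦ ∑ i, wᵢ J(Xᵢ, Y)` over SPD `Y`, where
`J(X, Y) = (1/4)(tr(X⁻¹ Y) + tr(Y⁻¹ X) − 2n)`. -/
theorem weighted_symmetrized_kl_center_spd
    {n N : ℕ} (hN : 0 < N)
    (X : Fin N → Matrix (Fin n) (Fin n) ℝ) (hX : ∀ i, (X i).PosDef)
    (w : Fin N → ℝ) (hw : ∀ i, 0 < w i)
    (A B : Matrix (Fin n) (Fin n) ℝ)
    (hAdef : A = (∑ j, w j)⁻¹ • ∑ i, w i • X i)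
    (hBdef : B = (∑ j, w j)⁻¹ • ∑ i, w i • (X i)⁻¹)
    (C : Matrix (Fin n) (Fin n) ℝ) (hC : C.PosDef) (hC2 : C * C = B⁻¹)
    (D : Matrix (Fin n) (Fin n) ℝ) (hD : D.PosDef) (hD2 : D * D = B)
    (E : Matrix (Fin n) (Fin n) ℝ) (hE : E.PosDef) (hE2 : E * E = D * A * D) :
    ∀ Y : Matrix (Fin n) (Fin n) ℝ, Y.PosDef →
      (∑ i, w i * ((1 / 4 : ℝ) *
          (((X i)⁻¹ * (C * E * C)).trace + ((C * E * C)⁻¹ * X i).trace - 2 * n))) ≤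
        ∑ i, w i * ((1 / 4 : ℝ) *
          (((X i)⁻¹ * Y).trace + (Y⁻¹ * X i).trace - 2 * n)) := by
  intro Y hY
  haveI : Nonempty (Fin N) := ⟨⟨0, hN⟩⟩
  have hW : 0 < ∑ j, w j := Finset.sum_pos (fun i _ => hw i) Finset.univ_nonempty
  haveI : Invertible C := C.invertibleOfIsUnitDet hC.det_pos.ne'.isUnit
  haveI : Invertible D := D.invertibleOfIsUnitDet hD.det_pos.ne'.isUnit
  haveI : Invertible E := E.invertibleOfIsUnitDet hE.det_pos.ne'.isUnit
  haveI : Invertible Y := Y.invertibleOfIsUnitDet hY.det_pos.ne'.isUnit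
  haveI : Invertible (D * Y) := invertibleMul _ _
  haveI : Invertible (D * Y * D) := invertibleMul _ _
  -- D = C⁻¹
  have hDC : D = C⁻¹ := by
    open MatrixOrder in refine (CFC.sq_eq_sq_iff D C⁻¹ hD.posSemidef.nonneg hC.inv.posSemidef.nonneg).mp ?_
    have h1 : C * C = D⁻¹ * D⁻¹ := by rw [hC2, ← hD2, Matrix.mul_inv_rev]
    have h2 : C⁻¹ * C⁻¹ = D * D := by
      rw [← Matrix.mul_inv_rev, h1, Matrix.mul_inv_rev, Matrix.inv_inv_of_invertible]
    rw [pow_two, pow_two, h2]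
  -- reduction of the weighted sums
  have key1 : ∀ Z : Matrix (Fin n) (Fin n) ℝ,
      ∑ i, w i * ((X i)⁻¹ * Z).trace = (∑ j, w j) * (B * Z).trace := by
    intro Z
    have hB' : (∑ j, w j) • B = ∑ i, w i • (X i)⁻¹ := by
      rw [hBdef, smul_smul, mul_inv_cancel₀ hW.ne', one_smul]
    calc ∑ i, w i * ((X i)⁻¹ * Z).trace
        = ∑ i, ((w i • (X i)⁻¹) * Z).trace := by
          simp [Matrix.smul_mul, Matrix.trace_smul, smul_eq_mul]
      _ = ((∑ i, w i • (X i)⁻¹) * Z).trace := by rw [Finset.sum_mul, Matrix.trace_sum]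
      _ = (((∑ j, w j) • B) * Z).trace := by rw [hB']
      _ = (∑ j, w j) * (B * Z).trace := by rw [Matrix.smul_mul, Matrix.trace_smul, smul_eq_mul]
  have key2 : ∀ Z : Matrix (Fin n) (Fin n) ℝ,
      ∑ i, w i * (Z * X i).trace = (∑ j, w j) * (Z * A).trace := by
    intro Z
    have hA' : (∑ j, w j) • A = ∑ i, w i • X i := by
      rw [hAdef, smul_smul, mul_inv_cancel₀ hW.ne', one_smul]
    calc ∑ i, w i * (Z * X i).trace
        = ∑ i, (Z * (w i • X i)).trace := by
          simp [Matrix.mul_smul, Matrix.trace_smul, smul_eq_mul]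
      _ = (Z * ∑ i, w i • X i).trace := by rw [Finset.mul_sum, Matrix.trace_sum]
      _ = (Z * ((∑ j, w j) • A)).trace := by rw [hA']
      _ = (∑ j, w j) * (Z * A).trace := by rw [Matrix.mul_smul, Matrix.trace_smul, smul_eq_mul]
  have expand : ∀ Z : Matrix (Fin n) (Fin n) ℝ,
      (∑ i, w i * ((1 / 4 : ℝ) * (((X i)⁻¹ * Z).trace + (Z⁻¹ * X i).trace - 2 * n)))
        = (1 / 4 : ℝ) * ((∑ j, w j) * ((B * Z).trace + (Z⁻¹ * A).trace - 2 * n)) := by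
    intro Z
    have h : ∀ i : Fin N, w i * ((1 / 4 : ℝ) * (((X i)⁻¹ * Z).trace + (Z⁻¹ * X i).trace - 2 * n))
        = (1/4 : ℝ) * (w i * ((X i)⁻¹ * Z).trace) + (1/4 : ℝ) * (w i * ((Z⁻¹ * X i)).trace)
          - ((1/4 : ℝ) * (2 * n)) * w i := fun i => by ring
    simp_rw [h]
    rw [Finset.sum_sub_distrib, Finset.sum_add_distrib, ← Finset.mul_sum, ← Finset.mul_sum,
      ← Finset.mul_sum, key1 Z, key2 Z⁻¹]
    ring
  rw [expand (C * E * C), expand Y]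
  -- value at M = C E C
  have hBM : (B * (C * E * C)).trace = E.trace := by
    have h : B * (C * E * C) = C⁻¹ * (E * C) := by
      rw [← hD2, hDC]
      simp only [Matrix.mul_assoc, Matrix.inv_mul_cancel_left_of_invertible]
    rw [h, Matrix.trace_mul_comm, Matrix.mul_assoc, Matrix.mul_inv_of_invertible, Matrix.mul_one]
  have hMinv : (C * E * C)⁻¹ = D * E⁻¹ * D := by
    rw [Matrix.mul_inv_rev, Matrix.mul_inv_rev, hDC, Matrix.mul_assoc]
  have hMA : ((C * E * C)⁻¹ * A).trace = E.trace := by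
    rw [hMinv, show D * E⁻¹ * D * A = D * (E⁻¹ * (D * A)) by noncomm_ring,
      Matrix.trace_mul_comm,
      show E⁻¹ * (D * A) * D = E⁻¹ * (D * A * D) by noncomm_ring, ← hE2,
      Matrix.inv_mul_cancel_left_of_invertible]
  -- value at Y via S = D Y D
  have hBY : (B * Y).trace = (D * Y * D).trace := by
    rw [← hD2, Matrix.trace_mul_cycle D D Y, Matrix.trace_mul_cycle Y D D]
  have hSinv : (D * Y * D)⁻¹ = D⁻¹ * Y⁻¹ * D⁻¹ := by
    rw [Matrix.mul_inv_rev, Matrix.mul_inv_rev, Matrix.mul_assoc]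
  have hYi : Y⁻¹ = D * (D * Y * D)⁻¹ * D := by
    rw [hSinv]
    simp only [Matrix.mul_assoc]
    rw [Matrix.inv_mul_of_invertible, Matrix.mul_one, Matrix.mul_inv_cancel_left_of_invertible]
  have hYA : (Y⁻¹ * A).trace = ((D * Y * D)⁻¹ * (E * E)).trace := by
    rw [hYi, hE2,
      show D * (D * Y * D)⁻¹ * D * A = D * ((D * Y * D)⁻¹ * (D * A)) by noncomm_ring,
      Matrix.trace_mul_comm,
      show (D * Y * D)⁻¹ * (D * A) * D = (D * Y * D)⁻¹ * (D * A * D) by noncomm_ring]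
  -- the key trace inequality
  have hDt : D.transpose = D := by simpa using hD.isHermitian.eq
  have hYt : Y.transpose = Y := by simpa using hY.isHermitian.eq
  have hEt : E.transpose = E := by simpa using hE.isHermitian.eq
  have hSym : Matrix.conjTranspose (D * Y * D - E) = D * Y * D - E := by
    simp [Matrix.conjTranspose_sub, Matrix.conjTranspose_mul, hDt, hYt, hEt, Matrix.mul_assoc]
  have hSinvPSD : ((D * Y * D)⁻¹).PosSemidef := by
    have h := hY.inv.posSemidef.mul_mul_conjTranspose_same D⁻¹
    rw [hD.inv.isHermitian.eq] at h
    rw [hSinv]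
    exact h
  have hKpsd := hSinvPSD.conjTranspose_mul_mul_same (D * Y * D - E)
  rw [hSym] at hKpsd
  have htr := trace_nonneg_of_psd hKpsd
  have hexp : ((D * Y * D - E) * (D * Y * D)⁻¹ * (D * Y * D - E)).trace
      = (D * Y * D).trace - 2 * E.trace + ((D * Y * D)⁻¹ * (E * E)).trace := by
    have h1 : (D * Y * D) * (D * Y * D)⁻¹ = 1 := Matrix.mul_inv_of_invertible _
    have h2 : (D * Y * D)⁻¹ * (D * Y * D) = 1 := Matrix.inv_mul_of_invertible _
    have h3 : (D * Y * D - E) * (D * Y * D)⁻¹ * (D * Y * D - E)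
        = (D * Y * D) * ((D * Y * D)⁻¹ * (D * Y * D)) - ((D * Y * D) * (D * Y * D)⁻¹) * E
          - E * ((D * Y * D)⁻¹ * (D * Y * D)) + E * ((D * Y * D)⁻¹ * E) := by noncomm_ring
    have h4 : (E * ((D * Y * D)⁻¹ * E)).trace = ((D * Y * D)⁻¹ * (E * E)).trace := by
      rw [Matrix.trace_mul_comm, Matrix.mul_assoc]
    rw [h3, h1, h2, Matrix.mul_one, Matrix.one_mul, Matrix.mul_one, Matrix.trace_add,
      Matrix.trace_sub, Matrix.trace_sub, h4]
    ring
  have hmain : (B * (C * E * C)).trace + ((C * E * C)⁻¹ * A).trace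
      ≤ (B * Y).trace + (Y⁻¹ * A).trace := by
    rw [hBM, hMA, hBY, hYA]
    linarith [htr, hexp]
  have h5 : (B * (C * E * C)).trace + ((C * E * C)⁻¹ * A).trace - 2 * n
      ≤ (B * Y).trace + (Y⁻¹ * A).trace - 2 * n := by linarith
  have h6 := mul_le_mul_of_nonneg_left h5 hW.le
  linarith
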